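/- Let ħ > 0, l ∈ ℕ, n ∈ ℕ, set λ = ħ(l + 1/2), and let E ∈ ℝ with E ≥ λ. Set r₋ = √(E - √(E^2 - λ^2)) and r₊ = √(E + √(E^2 - λ^2)). Then (1/ħ) ∫_{r₋}^{r₊} √(2E - r^2 - λ^2/r^2) dr = π (n + 1/2) if and only if E = ħ (2n + l + 3/2). -/

import Mathlib

set_option maxHeartbeats 1000000

open Real Set

lemma osc_integral (lam E s rm rp : ℝ) (hlam0 : 0 < lam) (hElt : lam < E)
    (hs : s = Real.sqrt (E ^ 2 - lam ^ 2)) (hrm : rm = Real.sqrt (E - s))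
    (hrp : rp = Real.sqrt (E + s)) :
    ∫ r in rm..rp, Real.sqrt (2 * E - r ^ 2 - lam ^ 2 / r ^ 2) = π * (E - lam) / 2 := by
  have hE0 : 0 < E := hlam0.trans hElt
  have hs0 : 0 < s := by
    rw [hs]; apply Real.sqrt_pos.2; nlinarith
  have hs2 : s ^ 2 = E ^ 2 - lam ^ 2 := by
    rw [hs]; exact Real.sq_sqrt (by nlinarith)
  have hsE : s < E := by
    nlinarith [hs0, hlam0]
  have hum : 0 < E - s := by linarith
  have hrm2 : rm ^ 2 = E - s := by rw [hrm]; exact Real.sq_sqrt hum.le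
  have hrp2 : rp ^ 2 = E + s := by rw [hrp]; exact Real.sq_sqrt (by linarith)
  have hrm0 : 0 < rm := by rw [hrm]; exact Real.sqrt_pos.2 hum
  have hrp0 : 0 < rp := by rw [hrp]; exact Real.sqrt_pos.2 (by linarith)
  have hrmrp : rm < rp := by
    rw [hrm, hrp]; exact Real.sqrt_lt_sqrt hum.le (by linarith)
  set F : ℝ → ℝ := fun r =>
    (Real.sqrt (2 * E * r ^ 2 - r ^ 4 - lam ^ 2) + E * Real.arcsin ((r ^ 2 - E) / s)
      + lam * Real.arcsin ((lam ^ 2 - E * r ^ 2) / (s * r ^ 2))) / 2 with hF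
  have hFc : ContinuousOn F (Set.Icc rm rp) := by
    apply ContinuousOn.div_const
    apply ContinuousOn.add
    apply ContinuousOn.add
    · exact (Real.continuous_sqrt.comp (by fun_prop)).continuousOn
    · exact (continuous_const.mul (Real.continuous_arcsin.comp
        (((continuous_pow 2).sub continuous_const).div_const s))).continuousOn
    · apply ContinuousOn.mul continuousOn_const
      apply Real.continuous_arcsin.comp_continuousOn
      apply ContinuousOn.div (by fun_prop) (by fun_prop)
      intro x hx
      have : 0 < x := lt_of_lt_of_le hrm0 hx.1
      positivity
  have hderiv : ∀ r ∈ Set.Ioo rm rp,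
      HasDerivAt F (Real.sqrt (2 * E - r ^ 2 - lam ^ 2 / r ^ 2)) r := by
    intro r hr
    have hr0 : 0 < r := hrm0.trans hr.1
    have hu1 : E - s < r ^ 2 := by nlinarith [hr.1, hrm0]
    have hu2 : r ^ 2 < E + s := by nlinarith [hr.2, hrp0]
    have hP : 0 < 2 * E * r ^ 2 - r ^ 4 - lam ^ 2 := by nlinarith
    have hsqP : Real.sqrt (2 * E * r ^ 2 - r ^ 4 - lam ^ 2) ^ 2
        = 2 * E * r ^ 2 - r ^ 4 - lam ^ 2 := Real.sq_sqrt hP.le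
    have hsqP0 : 0 < Real.sqrt (2 * E * r ^ 2 - r ^ 4 - lam ^ 2) := Real.sqrt_pos.2 hP
    have ha1l : (-1 : ℝ) < (r ^ 2 - E) / s := by rw [lt_div_iff₀ hs0]; linarith
    have ha1u : (r ^ 2 - E) / s < 1 := by rw [div_lt_one hs0]; linarith
    have hd0 : 0 < s * r ^ 2 := by positivity
    have ha2l : (-1 : ℝ) < (lam ^ 2 - E * r ^ 2) / (s * r ^ 2) := by
      rw [lt_div_iff₀ hd0]; nlinarith
    have ha2u : (lam ^ 2 - E * r ^ 2) / (s * r ^ 2) < 1 := by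
      rw [div_lt_one hd0]; nlinarith
    -- piece 1
    have hp : HasDerivAt (fun r : ℝ => 2 * E * r ^ 2 - r ^ 4 - lam ^ 2)
        (4 * E * r - 4 * r ^ 3) r := by
      have h1 := (hasDerivAt_pow 2 r).const_mul (2 * E)
      have h2 := hasDerivAt_pow 4 r
      exact ((h1.sub h2).sub_const (lam ^ 2)).congr_deriv (by ring)
    have hsq : HasDerivAt (fun r : ℝ => Real.sqrt (2 * E * r ^ 2 - r ^ 4 - lam ^ 2))
        (1 / (2 * Real.sqrt (2 * E * r ^ 2 - r ^ 4 - lam ^ 2)) * (4 * E * r - 4 * r ^ 3)) r :=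
      (Real.hasDerivAt_sqrt hP.ne').comp r hp
    -- piece 2
    have hi1 : HasDerivAt (fun r : ℝ => (r ^ 2 - E) / s) (2 * r / s) r := by
      have := ((hasDerivAt_pow 2 r).sub_const E).div_const s
      exact this.congr_deriv (by ring)
    have harc1 : HasDerivAt (fun r : ℝ => Real.arcsin ((r ^ 2 - E) / s))
        (1 / Real.sqrt (1 - ((r ^ 2 - E) / s) ^ 2) * (2 * r / s)) r :=
      by have := (Real.hasDerivAt_arcsin ha1l.ne' ha1u.ne).comp r hi1; exact this
    -- piece 3
    have hi2 : HasDerivAt (fun r : ℝ => (lam ^ 2 - E * r ^ 2) / (s * r ^ 2))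
        ((-(2 * E * r) * (s * r ^ 2) - (lam ^ 2 - E * r ^ 2) * (s * (2 * r))) / (s * r ^ 2) ^ 2)
        r := by
      have hnum : HasDerivAt (fun r : ℝ => lam ^ 2 - E * r ^ 2) (-(2 * E * r)) r := by
        have := ((hasDerivAt_pow 2 r).const_mul E).const_sub (lam ^ 2)
        exact this.congr_deriv (by ring)
      have hden : HasDerivAt (fun r : ℝ => s * r ^ 2) (s * (2 * r)) r := by
        have := (hasDerivAt_pow 2 r).const_mul s
        exact this.congr_deriv (by ring)
      exact hnum.div hden hd0.ne'
    have harc2 : HasDerivAt (fun r : ℝ => Real.arcsin ((lam ^ 2 - E * r ^ 2) / (s * r ^ 2)))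
        (1 / Real.sqrt (1 - ((lam ^ 2 - E * r ^ 2) / (s * r ^ 2)) ^ 2) *
          ((-(2 * E * r) * (s * r ^ 2) - (lam ^ 2 - E * r ^ 2) * (s * (2 * r))) / (s * r ^ 2) ^ 2))
        r :=
      by have := (Real.hasDerivAt_arcsin ha2l.ne' ha2u.ne).comp r hi2; exact this
    -- assemble
    have hFd := ((hsq.add (harc1.const_mul E)).add (harc2.const_mul lam)).div_const 2
    refine hFd.congr_deriv ?_
    symm
    -- now prove value equality
    have e1 : Real.sqrt (1 - ((r ^ 2 - E) / s) ^ 2)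
        = Real.sqrt (2 * E * r ^ 2 - r ^ 4 - lam ^ 2) / s := by
      have : 1 - ((r ^ 2 - E) / s) ^ 2 = (2 * E * r ^ 2 - r ^ 4 - lam ^ 2) / s ^ 2 := by
        field_simp
        linear_combination hs2
      rw [this, Real.sqrt_div hP.le, Real.sqrt_sq hs0.le]
    have e2 : Real.sqrt (1 - ((lam ^ 2 - E * r ^ 2) / (s * r ^ 2)) ^ 2)
        = lam * Real.sqrt (2 * E * r ^ 2 - r ^ 4 - lam ^ 2) / (s * r ^ 2) := by
      have h : 1 - ((lam ^ 2 - E * r ^ 2) / (s * r ^ 2)) ^ 2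
          = (lam / (s * r ^ 2)) ^ 2 * (2 * E * r ^ 2 - r ^ 4 - lam ^ 2) := by
        field_simp
        linear_combination r ^ 4 * hs2
      rw [h, Real.sqrt_mul (sq_nonneg _), Real.sqrt_sq (by positivity)]
      ring
    have e3 : Real.sqrt (2 * E - r ^ 2 - lam ^ 2 / r ^ 2)
        = Real.sqrt (2 * E * r ^ 2 - r ^ 4 - lam ^ 2) / r := by
      have : 2 * E - r ^ 2 - lam ^ 2 / r ^ 2 = (2 * E * r ^ 2 - r ^ 4 - lam ^ 2) / r ^ 2 := by
        field_simp
      rw [this, Real.sqrt_div hP.le, Real.sqrt_sq hr0.le]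
    rw [e1, e2, e3]
    generalize Real.sqrt (2 * E * r ^ 2 - r ^ 4 - lam ^ 2) = q at hsqP hsqP0 ⊢
    field_simp
    linear_combination 4 * hsqP
  have hint : IntervalIntegrable (fun r => Real.sqrt (2 * E - r ^ 2 - lam ^ 2 / r ^ 2))
      MeasureTheory.volume rm rp := by
    apply ContinuousOn.intervalIntegrable
    apply Real.continuous_sqrt.comp_continuousOn
    apply ContinuousOn.sub (by fun_prop)
    apply ContinuousOn.div continuousOn_const (by fun_prop)
    intro x hx
    rw [Set.uIcc_of_le hrmrp.le] at hx
    have : 0 < x := lt_of_lt_of_le hrm0 hx.1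
    positivity
  rw [intervalIntegral.integral_eq_sub_of_hasDerivAt_of_le hrmrp.le hFc hderiv hint]
  -- evaluate F at endpoints
  have hFrp : F rp = (E * (π / 2) + lam * (-(π / 2))) / 2 := by
    rw [hF]
    simp only
    have h1 : 2 * E * rp ^ 2 - rp ^ 4 - lam ^ 2 = 0 := by
      have : rp ^ 4 = (rp ^ 2) ^ 2 := by ring
      rw [this, hrp2]; nlinarith [hs2]
    have h2 : (rp ^ 2 - E) / s = 1 := by rw [hrp2]; field_simp; ring
    have h3 : (lam ^ 2 - E * rp ^ 2) / (s * rp ^ 2) = -1 := by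
      rw [hrp2]; rw [div_eq_iff (by positivity)]; nlinarith [hs2]
    rw [h1, h2, h3, Real.sqrt_zero, Real.arcsin_one, Real.arcsin_neg_one]
    ring
  have hFrm : F rm = (E * (-(π / 2)) + lam * (π / 2)) / 2 := by
    rw [hF]
    simp only
    have h1 : 2 * E * rm ^ 2 - rm ^ 4 - lam ^ 2 = 0 := by
      have : rm ^ 4 = (rm ^ 2) ^ 2 := by ring
      rw [this, hrm2]; nlinarith [hs2]
    have h2 : (rm ^ 2 - E) / s = -1 := by
      rw [hrm2]; rw [div_eq_iff hs0.ne']; ring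
    have h3 : (lam ^ 2 - E * rm ^ 2) / (s * rm ^ 2) = 1 := by
      rw [hrm2]; rw [div_eq_iff (by positivity)]; nlinarith [hs2]
    rw [h1, h2, h3, Real.sqrt_zero, Real.arcsin_one, Real.arcsin_neg_one]
    ring
  rw [hFrp, hFrm]
  ring


/-- Exact-WKB (Bohr–Sommerfeld with Maslov phases) quantization for the radial 3D
harmonic oscillator `V(r) = r²/2` with angular momentum `l`: for `hbar > 0`,
`λ = hbar(l + 1/2)`, `E ≥ λ`, and turning points `r∓ = √(E ∓ √(E² - λ²))`, the condition
`(1/hbar) ∫_{r₋}^{r₊} √(2E - r² - λ²/r²) dr = π(n + 1/2)` holds if and only if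
`E = hbar(2n + l + 3/2)`. -/
theorem oscillator_quantization (hbar : ℝ) (hhbar : 0 < hbar) (l n : ℕ) (lam E rm rp : ℝ)
    (hlam : lam = hbar * (l + 1 / 2)) (hE : lam ≤ E)
    (hrm : rm = Real.sqrt (E - Real.sqrt (E ^ 2 - lam ^ 2)))
    (hrp : rp = Real.sqrt (E + Real.sqrt (E ^ 2 - lam ^ 2))) :
    (1 / hbar) * ∫ r in rm..rp, Real.sqrt (2 * E - r ^ 2 - lam ^ 2 / r ^ 2) =
        Real.pi * (n + 1 / 2) ↔
      E = hbar * (2 * n + l + 3 / 2) := by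
  have hlam0 : 0 < lam := by
    rw [hlam]; positivity
  have hπ := Real.pi_pos
  rcases eq_or_lt_of_le hE with hEeq | hElt
  · -- degenerate case E = lam
    have h0 : E ^ 2 - lam ^ 2 = 0 := by rw [← hEeq]; ring
    have : rm = rp := by rw [hrm, hrp, h0, Real.sqrt_zero, sub_zero, add_zero]
    rw [this, intervalIntegral.integral_same]
    constructor
    · intro h
      exfalso
      have : (0:ℝ) < Real.pi * (n + 1/2) := by positivity
      simp at h
      nlinarith [Nat.cast_nonneg (α := ℝ) n]
    · intro h
      exfalso
      rw [← hEeq, hlam] at h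
      have hn : (0:ℝ) ≤ (n:ℝ) := Nat.cast_nonneg n
      nlinarith
  · rw [osc_integral lam E (Real.sqrt (E ^ 2 - lam ^ 2)) rm rp hlam0 hElt rfl hrm hrp]
    constructor
    · intro h
      have h2 : Real.pi * (E - lam) = Real.pi * (hbar * (2 * n + 1)) := by
        field_simp at h
        nlinarith
      have h3 := mul_left_cancel₀ (ne_of_gt hπ) h2
      rw [hlam] at h3
      linarith
    · intro h
      rw [h, hlam]
      field_simp
      ring
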